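/- arXiv:0909.4287 — 2 statements merged into one kernel-verified Lean document; each statement's English description precedes it below -/
import Mathlib

section
/- Let $p$ be a prime, let $i \geq 1$, and for each integer $d$ with $1 \leq d \leq i$ and $p \nmid d$ let $r(d)$ denote the number of natural numbers $s$ with $p^s d \leq i$. Then $\prod_{\substack{1 \leq d \leq i \\ p \nmid d}} \ \prod_{k=0}^{r(d)-1} p^{r(d)-1-k} \left( i + 1 - p^{r(d)-1-k} d \right) = p^{v_p(i!)} \cdot i!$, where $v_p$ denotes the $p$-adic valuation. -/
/-- Let `p` be prime, `i ≥ 1`, and for `1 ≤ d ≤ i` with `p ∤ d` let `r d` be the number of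
natural numbers `s` with `p^s * d ≤ i`.  Then
`∏ d, ∏ k < r d, p^(r d - 1 - k) * (i + 1 - p^(r d - 1 - k) * d) = p^(v_p(i!)) * i!`. -/
theorem prod_prod_eq_pow_factorization_mul_factorial
    (p : ℕ) (hp : p.Prime) (i : ℕ) (hi : 1 ≤ i) (r : ℕ → ℕ)
    (hr : ∀ d ∈ (Finset.Icc 1 i).filter (fun d => ¬ p ∣ d),
      r d = Nat.card {s : ℕ | p ^ s * d ≤ i}) :
    ∏ d ∈ (Finset.Icc 1 i).filter (fun d => ¬ p ∣ d),
      ∏ k ∈ Finset.range (r d),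
        p ^ (r d - 1 - k) * (i + 1 - p ^ (r d - 1 - k) * d)
      = p ^ ((Nat.factorial i).factorization p) * Nat.factorial i := by
  classical
  set F := (Finset.Icc 1 i).filter (fun d => ¬ p ∣ d) with hF
  -- key characterization of r
  have key : ∀ d ∈ F, ∀ k : ℕ, (k < r d ↔ p ^ k * d ≤ i) := by
    intro d hd k
    simp only [hF, Finset.mem_filter, Finset.mem_Icc] at hd
    obtain ⟨⟨hd1, hdi⟩, hnd⟩ := hd
    have hd0 : 0 < d := hd1
    have hid : i / d ≠ 0 := by
      have : 1 ≤ i / d := (Nat.one_le_div_iff hd0).mpr hdi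
      omega
    have hiff : ∀ s : ℕ, p ^ s * d ≤ i ↔ s ≤ Nat.log p (i / d) := by
      intro s
      rw [← Nat.le_div_iff_mul_le hd0, Nat.le_log_iff_pow_le hp.one_lt hid]
    have hset : {s : ℕ | p ^ s * d ≤ i} = ↑(Finset.Iic (Nat.log p (i / d))) := by
      ext s; simp [hiff s]
    rw [hr d (by simp [hF, Finset.mem_filter, Finset.mem_Icc, hd1, hdi, hnd]),
      hset, Nat.card_coe_set_eq, Set.ncard_coe_finset, Nat.card_Iic]
    rw [hiff k]; omega
  have hval : ∀ d k : ℕ, ¬ p ∣ d → 1 ≤ d → (p ^ k * d).factorization p = k := by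
    intro d k hnd hd1
    rw [Nat.factorization_mul (pow_ne_zero k hp.pos.ne') (by omega),
      Nat.Prime.factorization_pow hp]
    simp [Nat.factorization_eq_zero_of_not_dvd hnd]
  -- reflect the inner products
  have step1 : ∀ d ∈ F,
      ∏ k ∈ Finset.range (r d), p ^ (r d - 1 - k) * (i + 1 - p ^ (r d - 1 - k) * d)
        = ∏ k ∈ Finset.range (r d), p ^ k * (i + 1 - p ^ k * d) := by
    intro d _
    exact Finset.prod_range_reflect (fun k => p ^ k * (i + 1 - p ^ k * d)) (r d)
  rw [Finset.prod_congr rfl step1]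
  -- convert to sigma, then bijection onto Icc 1 i
  rw [← Finset.prod_sigma (F) (fun d => Finset.range (r d))
      (fun x => p ^ x.2 * (i + 1 - p ^ x.2 * x.1))]
  have step2 : ∏ x ∈ F.sigma (fun d => Finset.range (r d)), p ^ x.2 * (i + 1 - p ^ x.2 * x.1)
      = ∏ m ∈ Finset.Icc 1 i, p ^ (m.factorization p) * (i + 1 - m) := by
    apply Finset.prod_bij (fun x _ => p ^ x.2 * x.1)
    · -- maps into
      rintro ⟨d, k⟩ hx
      simp only [Finset.mem_sigma, Finset.mem_range] at hx
      obtain ⟨hdF, hk⟩ := hx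
      dsimp only
      have hd1 : 1 ≤ d := by
        simp only [hF, Finset.mem_filter, Finset.mem_Icc] at hdF; exact hdF.1.1
      have := (key d hdF k).mp hk
      refine Finset.mem_Icc.mpr ⟨?_, this⟩
      have : 0 < p ^ k * d := Nat.mul_pos (pow_pos hp.pos k) hd1
      omega
    · -- injective
      rintro ⟨d1, k1⟩ hx1 ⟨d2, k2⟩ hx2 heq
      simp only [Finset.mem_sigma, Finset.mem_range] at hx1 hx2
      have hnd1 : ¬ p ∣ d1 := (Finset.mem_filter.mp hx1.1).2
      have hnd2 : ¬ p ∣ d2 := (Finset.mem_filter.mp hx2.1).2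
      have hd1 : 1 ≤ d1 := (Finset.mem_Icc.mp (Finset.mem_filter.mp hx1.1).1).1
      have hd2 : 1 ≤ d2 := (Finset.mem_Icc.mp (Finset.mem_filter.mp hx2.1).1).1
      have hk : k1 = k2 := by
        rw [← hval d1 k1 hnd1 hd1, ← hval d2 k2 hnd2 hd2, heq]
      subst hk
      have hdeq : d1 = d2 :=
        Nat.eq_of_mul_eq_mul_left (pow_pos hp.pos k1) heq
      simp [hdeq]
    · -- surjective
      intro m hm
      rw [Finset.mem_Icc] at hm
      have hm0 : m ≠ 0 := by omega
      set k := m.factorization p with hk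
      set d := m / p ^ k with hd
      have hmd : p ^ k * d = m := Nat.ordProj_mul_ordCompl_eq_self m p
      have hnd : ¬ p ∣ d := Nat.not_dvd_ordCompl hp hm0
      have hd0 : 0 < d := Nat.ordCompl_pos p hm0
      have hdi : d ≤ i := le_trans (Nat.ordCompl_le m p) hm.2
      have hdF : d ∈ F := by
        simp only [hF, Finset.mem_filter, Finset.mem_Icc]
        exact ⟨⟨hd0, hdi⟩, hnd⟩
      refine ⟨⟨d, k⟩, ?_, hmd⟩
      simp only [Finset.mem_sigma, Finset.mem_range]
      exact ⟨hdF, (key d hdF k).mpr (by rw [hmd]; exact hm.2)⟩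
    · -- values agree
      rintro ⟨d, k⟩ hx
      simp only [Finset.mem_sigma, Finset.mem_range] at hx
      have hnd : ¬ p ∣ d := (Finset.mem_filter.mp hx.1).2
      have hd1 : 1 ≤ d := (Finset.mem_Icc.mp (Finset.mem_filter.mp hx.1).1).1
      rw [hval d k hnd hd1]
  rw [step2, Finset.prod_mul_distrib, Finset.prod_pow_eq_pow_sum]
  congr 1
  · -- sum of valuations = valuation of factorial
    congr 1
    have hfac : Nat.factorial i = ∏ m ∈ Finset.Icc 1 i, m := by
      rw [← Finset.Ico_add_one_right_eq_Icc, Finset.prod_Ico_id_eq_factorial]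
    rw [hfac, Nat.factorization_prod (fun m hm => by
      rw [Finset.mem_Icc] at hm; omega)]
    simp [Finsupp.finset_sum_apply]
  · -- product of (i+1-m) over Icc 1 i is i!
    rw [← Finset.Ico_add_one_right_eq_Icc, ← Finset.prod_Ico_id_eq_factorial]
    refine Finset.prod_nbij' (fun m => i + 1 - m) (fun m => i + 1 - m) ?_ ?_ ?_ ?_ ?_ <;>
      intro m hm <;> simp only [Finset.mem_Ico] at hm ⊢ <;> omega
end

section
/- Let $p$ be a prime, let $i \geq 1$, and for each integer $d$ with $1 \leq d \leq i$ and $p \nmid d$ let $r(d)$ denote the number of natural numbers $s$ with $p^s d \leq i$. Then the $p$-adic valuation of the product $\prod_{\substack{1 \leq d \leq i \\ p \nmid d}} \ \prod_{k=0}^{r(d)-1} p^{r(d)-1-k} \left( i + 1 - p^{r(d)-1-k} d \right)$ equals $v_p\big((i!)^2\big) = 2\, v_p(i!)$. -/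
lemma aux_pow_le_iff (p : ℕ) (hp : p.Prime) (i d : ℕ) (hd : 1 ≤ d) (R : ℕ)
    (hR : R = Nat.card {s : ℕ | p ^ s * d ≤ i}) (e : ℕ) :
    p ^ e * d ≤ i ↔ e < R := by
  have hex : ∃ s, i < p ^ s * d := by
    refine ⟨i + 1, ?_⟩
    calc i < 2 ^ (i + 1) := by
          have := @Nat.lt_two_pow_self i
          omega
      _ ≤ p ^ (i + 1) := Nat.pow_le_pow_left hp.two_le _
      _ ≤ p ^ (i + 1) * d := Nat.le_mul_of_pos_right _ hd
  have key : ∀ e, p ^ e * d ≤ i ↔ e < Nat.find hex := by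
    intro e
    constructor
    · intro h
      by_contra hc
      push_neg at hc
      have h1 := Nat.find_spec hex
      have h2 : p ^ Nat.find hex * d ≤ p ^ e * d :=
        Nat.mul_le_mul_right d (Nat.pow_le_pow_right hp.pos hc)
      omega
    · intro h
      have := Nat.find_min hex h
      omega
  have hset : {s : ℕ | p ^ s * d ≤ i} = ↑(Finset.range (Nat.find hex)) := by
    ext s; simp [key s]
  rw [hR, hset, Nat.card_coe_set_eq, Set.ncard_coe_finset, Finset.card_range]
  exact key e

/-- Let `p` be prime, `i ≥ 1`, and for `1 ≤ d ≤ i` with `p ∤ d` let `r d` be the number of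
natural numbers `s` with `p^s * d ≤ i`.  Then the `p`-adic valuation of
`∏ d, ∏ k < r d, p^(r d - 1 - k) * (i + 1 - p^(r d - 1 - k) * d)` equals
`v_p((i!)^2) = 2 * v_p(i!)`. -/
theorem factorization_prod_prod_eq_two_mul
    (p : ℕ) (hp : p.Prime) (i : ℕ) (hi : 1 ≤ i) (r : ℕ → ℕ)
    (hr : ∀ d ∈ (Finset.Icc 1 i).filter (fun d => ¬ p ∣ d),
      r d = Nat.card {s : ℕ | p ^ s * d ≤ i}) :
    (∏ d ∈ (Finset.Icc 1 i).filter (fun d => ¬ p ∣ d),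
      ∏ k ∈ Finset.range (r d),
        p ^ (r d - 1 - k) * (i + 1 - p ^ (r d - 1 - k) * d)).factorization p
      = ((Nat.factorial i) ^ 2).factorization p ∧
    ((Nat.factorial i) ^ 2).factorization p = 2 * (Nat.factorial i).factorization p := by
  have hsq : ((Nat.factorial i) ^ 2).factorization p
      = 2 * (Nat.factorial i).factorization p := by
    simp [Nat.factorization_pow]
  refine ⟨?_, hsq⟩
  rw [hsq]
  set F := (Finset.Icc 1 i).filter (fun d => ¬ p ∣ d) with hF
  have hmem : ∀ d ∈ F, 1 ≤ d ∧ d ≤ i ∧ ¬ p ∣ d := by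
    intro d hd
    rw [hF, Finset.mem_filter, Finset.mem_Icc] at hd
    exact ⟨hd.1.1, hd.1.2, hd.2⟩
  have hiff : ∀ d ∈ F, ∀ e, p ^ e * d ≤ i ↔ e < r d := fun d hd e =>
    aux_pow_le_iff p hp i d (hmem d hd).1 (r d) (hr d hd) e
  -- value of the p-adic valuation of factorial
  have hfact : (Nat.factorial i).factorization p
      = ∑ m ∈ Finset.Icc 1 i, m.factorization p := by
    rw [← Finset.prod_Ico_id_eq_factorial, Finset.Ico_add_one_right_eq_Icc,
      Nat.factorization_prod (fun m hm => by
        rw [Finset.mem_Icc] at hm; omega), Finset.sum_apply']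
  -- the valuation of each m = p^e * d
  have hval : ∀ d ∈ F, ∀ e, (p ^ e * d).factorization p = e := by
    intro d hd e
    have h1 := (hmem d hd).1
    have h3 := (hmem d hd).2.2
    rw [Nat.factorization_mul (pow_ne_zero _ hp.pos.ne') (by omega),
      hp.factorization_pow, Finsupp.add_apply, Finsupp.single_eq_same,
      Nat.factorization_eq_zero_of_not_dvd h3]
    omega
  set g : ℕ → ℕ := fun m => m.factorization p + (i + 1 - m).factorization p with hg
  have hL : (∏ d ∈ F, ∏ k ∈ Finset.range (r d),
        p ^ (r d - 1 - k) * (i + 1 - p ^ (r d - 1 - k) * d)).factorization p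
      = ∑ d ∈ F, ∑ e ∈ Finset.range (r d), g (p ^ e * d) := by
    have hne : ∀ d ∈ F, ∀ k ∈ Finset.range (r d),
        p ^ (r d - 1 - k) * (i + 1 - p ^ (r d - 1 - k) * d) ≠ 0 := by
      intro d hd k hk
      rw [Finset.mem_range] at hk
      have hlt : r d - 1 - k < r d := by omega
      have := (hiff d hd (r d - 1 - k)).mpr hlt
      have := pow_pos hp.pos (r d - 1 - k)
      exact Nat.mul_ne_zero (by omega) (by omega)
    rw [Nat.factorization_prod (fun d hd =>
      Finset.prod_ne_zero_iff.mpr (hne d hd)), Finset.sum_apply']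
    refine Finset.sum_congr rfl fun d hd => ?_
    rw [Nat.factorization_prod (hne d hd), Finset.sum_apply',
      Finset.sum_range_reflect
        (fun e => (p ^ e * (i + 1 - p ^ e * d)).factorization p) (r d)]
    refine Finset.sum_congr rfl fun e he => ?_
    rw [Finset.mem_range] at he
    have hle := (hiff d hd e).mpr he
    have hd1 := (hmem d hd).1
    rw [Nat.factorization_mul (pow_ne_zero _ hp.pos.ne') (by omega),
      hp.factorization_pow, Finsupp.add_apply, Finsupp.single_eq_same]
    simp only [hg]
    rw [hval d hd e]
  rw [hL]
  -- reindex the double sum as a sum over Icc 1 i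
  have hbij : ∑ d ∈ F, ∑ e ∈ Finset.range (r d), g (p ^ e * d)
      = ∑ m ∈ Finset.Icc 1 i, g m := by
    rw [Finset.sum_sigma']
    refine Finset.sum_nbij' (fun x => p ^ x.2 * x.1)
      (fun m => ⟨ordCompl[p] m, m.factorization p⟩) ?_ ?_ ?_ ?_ ?_
    · rintro ⟨d, e⟩ hx
      rw [Finset.mem_sigma, Finset.mem_range] at hx
      rw [Finset.mem_Icc]
      have := (hiff d hx.1 e).mpr hx.2
      have := (hmem d hx.1).1
      have := pow_pos hp.pos e
      constructor <;> nlinarith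
    · intro m hm
      rw [Finset.mem_Icc] at hm
      have hm0 : m ≠ 0 := by omega
      rw [Finset.mem_sigma, Finset.mem_range]
      have hcm : ordCompl[p] m ∈ F := by
        rw [hF, Finset.mem_filter, Finset.mem_Icc]
        refine ⟨⟨Nat.ordCompl_pos p hm0, le_trans (Nat.ordCompl_le m p) hm.2⟩,
          Nat.not_dvd_ordCompl hp hm0⟩
      refine ⟨hcm, ?_⟩
      rw [← hiff _ hcm, Nat.ordProj_mul_ordCompl_eq_self]
      exact hm.2
    · rintro ⟨d, e⟩ hx
      rw [Finset.mem_sigma, Finset.mem_range] at hx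
      have hv := hval d hx.1 e
      have hd1 := (hmem d hx.1).1
      have : ordCompl[p] (p ^ e * d) = d := by
        rw [hv, Nat.mul_div_cancel_left _ (pow_pos hp.pos e)]
      exact Sigma.ext this (heq_of_eq hv)
    · intro m hm
      rw [Finset.mem_Icc] at hm
      exact Nat.ordProj_mul_ordCompl_eq_self m p
    · intro x hx
      rfl
  rw [hbij, hg]
  rw [Finset.sum_add_distrib, hfact, two_mul]
  congr 1
  refine Finset.sum_nbij' (fun m => i + 1 - m) (fun m => i + 1 - m) ?_ ?_ ?_ ?_ ?_ <;>
      intro m hm <;> simp only [Finset.mem_Icc] at hm ⊢ <;> omega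
end
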